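/- Let $1 \le i \le d$ be integers. For a finite subset $\mu = \{\mu_1 > \mu_2 > \cdots > \mu_k\}$ of $\{1,\ldots,d\}$, define the $q$-multinomial $\binom{d}{\mu}_q = \binom{d}{\mu_1}_q \binom{\mu_1}{\mu_2}_q \cdots \binom{\mu_{k-1}}{\mu_k}_q$ (with $\binom{d}{\emptyset}_q = 1$). Then $\sum_{\mu \subseteq \{1,\ldots,i-1\}} \binom{d}{\mu \cup \{i\}}_q \prod_{j\in\mu} q^{j^2} \prod_{j \in \{1,\ldots,i-1\}\setminus\mu} (1-q^{j^2}) = \binom{d}{i}_q \prod_{j=1}^{i} \frac{1-q^{j^2}}{1-q^{j}}$ as rational functions in $q$. -/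

import Mathlib

/-- The indeterminate `q`, viewed in the field of rational functions over `ℚ`. -/
noncomputable def q : RatFunc ℚ := RatFunc.X

/-- The Gaussian (q-)binomial coefficient `(n choose k)_q`. -/
noncomputable def qbinom (n k : ℕ) : RatFunc ℚ :=
  ∏ i ∈ Finset.range k, (1 - q ^ (n - i)) / (1 - q ^ (i + 1))

/-- The `q`-multinomial coefficient `(d choose μ)_q` attached to a finite set
`μ = {μ₁ > μ₂ > ⋯ > μ_k}`: the product
`(d choose μ₁)_q (μ₁ choose μ₂)_q ⋯ (μ_{k-1} choose μ_k)_q`,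
with `(d choose ∅)_q = 1`. -/
noncomputable def qmultinom (d : ℕ) (μ : Finset ℕ) : RatFunc ℚ :=
  (((d :: (μ.sort (· ≤ ·)).reverse).zip ((μ.sort (· ≤ ·)).reverse)).map
    (fun pr => qbinom pr.1 pr.2)).prod

/-! ### Auxiliary machinery -/

/-- `(q;q)_m = ∏_{j=1}^m (1 - q^j)`. -/
noncomputable def poch (m : ℕ) : RatFunc ℚ := ∏ j ∈ Finset.range m, (1 - q ^ (j + 1))

lemma one_sub_q_pow_ne_zero {m : ℕ} (hm : 1 ≤ m) : (1 : RatFunc ℚ) - q ^ m ≠ 0 := by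
  have hpoly : (1 : Polynomial ℚ) - Polynomial.X ^ m ≠ 0 := by
    intro h
    have h2 := congrArg (fun p => Polynomial.coeff p m) h
    simp only [Polynomial.coeff_sub, Polynomial.coeff_one, Polynomial.coeff_X_pow, if_pos rfl,
      Polynomial.coeff_zero] at h2
    rw [if_neg (by omega : ¬ m = 0)] at h2
    norm_num at h2
  intro h
  apply RatFunc.algebraMap_ne_zero hpoly
  rw [map_sub, map_one, map_pow, RatFunc.algebraMap_X]
  exact h

lemma poch_succ (m : ℕ) : poch (m + 1) = poch m * (1 - q ^ (m + 1)) := by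
  rw [poch, Finset.prod_range_succ]; rfl

lemma poch_ne_zero (m : ℕ) : poch m ≠ 0 := by
  induction m with
  | zero => simp [poch]
  | succ k ih =>
    rw [poch_succ]
    exact mul_ne_zero ih (one_sub_q_pow_ne_zero (by omega))

lemma qbinom_zero (n : ℕ) : qbinom n 0 = 1 := by simp [qbinom]

lemma prod_top_mul_poch {n k : ℕ} (h : k ≤ n) :
    (∏ i ∈ Finset.range k, (1 - q ^ (n - i))) * poch (n - k) = poch n := by
  induction k with
  | zero => simp
  | succ j ih =>
    have hj : j ≤ n := by omega
    have h1 : n - j = (n - (j + 1)) + 1 := by omega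
    rw [Finset.prod_range_succ, h1, mul_assoc, mul_comm (1 - q ^ (n - (j + 1) + 1)),
      ← poch_succ, ← h1, ih hj]

lemma qbinom_mul_poch {n k : ℕ} (h : k ≤ n) :
    qbinom n k * (poch k * poch (n - k)) = poch n := by
  have hq : qbinom n k = (∏ i ∈ Finset.range k, (1 - q ^ (n - i))) / poch k := by
    rw [qbinom, poch, Finset.prod_div_distrib]
  rw [hq, div_mul_eq_mul_div, mul_comm (poch k), ← mul_assoc,
    prod_top_mul_poch h, mul_div_assoc, div_self (poch_ne_zero k), mul_one]

/-- The Durfee summand `q^{a²} / ((q;q)_a² (q;q)_b)`. -/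
noncomputable def Aq (a b : ℕ) : RatFunc ℚ := q ^ (a ^ 2) / (poch a ^ 2 * poch b)

/-- The Durfee-square identity. -/
lemma durfee (n : ℕ) : ∑ p ∈ Finset.HasAntidiagonal.antidiagonal n, Aq p.1 p.2 = 1 / poch n ^ 2 := by
  induction n with
  | zero => simp [Aq, poch]
  | succ n ih =>
    set H₁ : ℕ × ℕ → RatFunc ℚ := fun p =>
      (1 - q ^ (2 * p.1 + p.2)) * (1 - q ^ p.2) * (q ^ (p.1 ^ 2) / (poch p.1 ^ 2 * poch p.2))
      with hH₁
    set H₂ : ℕ × ℕ → RatFunc ℚ := fun p =>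
      q ^ (p.1 ^ 2 + p.2) * (1 - q ^ p.1) ^ 2 / (poch p.1 ^ 2 * poch p.2) with hH₂
    have key1 : ∑ p ∈ Finset.HasAntidiagonal.antidiagonal (n + 1), H₁ p
        = ∑ p ∈ Finset.HasAntidiagonal.antidiagonal n, (1 - q ^ (2 * p.1 + p.2 + 1)) * Aq p.1 p.2 := by
      rw [Finset.Nat.sum_antidiagonal_succ' (f := H₁)]
      have h0 : H₁ (n + 1, 0) = 0 := by simp [hH₁]
      rw [h0, zero_add]
      refine Finset.sum_congr rfl fun p _ => ?_
      have ha := poch_ne_zero p.1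
      have hb := poch_ne_zero p.2
      have hb1 := one_sub_q_pow_ne_zero (m := p.2 + 1) (by omega)
      simp only [hH₁, Aq, poch_succ]
      field_simp
      ring
    have key2 : ∑ p ∈ Finset.HasAntidiagonal.antidiagonal (n + 1), H₂ p
        = ∑ p ∈ Finset.HasAntidiagonal.antidiagonal n, q ^ (2 * p.1 + p.2 + 1) * Aq p.1 p.2 := by
      rw [Finset.Nat.sum_antidiagonal_succ (f := H₂)]
      have h0 : H₂ (0, n + 1) = 0 := by simp [hH₂]
      rw [h0, zero_add]
      refine Finset.sum_congr rfl fun p _ => ?_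
      have ha := poch_ne_zero p.1
      have hb := poch_ne_zero p.2
      have ha1 := one_sub_q_pow_ne_zero (m := p.1 + 1) (by omega)
      simp only [hH₂, Aq, poch_succ]
      field_simp
      ring
    have point : ∀ p ∈ Finset.HasAntidiagonal.antidiagonal (n + 1),
        H₁ p + H₂ p = (1 - q ^ (n + 1)) ^ 2 * Aq p.1 p.2 := by
      intro p hp
      have hab : p.1 + p.2 = n + 1 := Finset.HasAntidiagonal.mem_antidiagonal.mp hp
      have ha := poch_ne_zero p.1
      have hb := poch_ne_zero p.2
      simp only [hH₁, hH₂, Aq, ← hab]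
      field_simp
      ring
    have final : (1 / poch n ^ 2 : RatFunc ℚ)
        = (1 - q ^ (n + 1)) ^ 2 * ∑ p ∈ Finset.HasAntidiagonal.antidiagonal (n + 1), Aq p.1 p.2 := by
      rw [← ih, Finset.mul_sum, ← Finset.sum_congr rfl point, Finset.sum_add_distrib,
        key1, key2, ← Finset.sum_add_distrib]
      refine Finset.sum_congr rfl fun p _ => ?_
      ring
    have h1 : ((1 : RatFunc ℚ) - q ^ (n + 1)) ≠ 0 := one_sub_q_pow_ne_zero (by omega)
    have hpn := poch_ne_zero n
    rw [poch_succ]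
    rw [eq_comm, mul_comm, ← eq_div_iff (pow_ne_zero 2 h1)] at final
    rw [final]
    rw [div_div, mul_pow]

/-- `f n k = ∑_{j=0}^k q^{j²} (n choose j)_q ∏_{m=j+1}^k (1-q^m)`. -/
noncomputable def fq (n k : ℕ) : RatFunc ℚ :=
  ∑ j ∈ Finset.range (k + 1),
    q ^ (j ^ 2) * qbinom n j * ∏ m ∈ Finset.Ico j k, (1 - q ^ (m + 1))

lemma fq_zero (n : ℕ) : fq n 0 = 1 := by
  simp [fq, qbinom_zero]

lemma fq_succ (n k : ℕ) :
    fq n (k + 1) = q ^ ((k + 1) ^ 2) * qbinom n (k + 1) + (1 - q ^ (k + 1)) * fq n k := by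
  rw [fq, Finset.sum_range_succ]
  have hlast : q ^ ((k + 1) ^ 2) * qbinom n (k + 1)
      * ∏ m ∈ Finset.Ico (k + 1) (k + 1), (1 - q ^ (m + 1))
      = q ^ ((k + 1) ^ 2) * qbinom n (k + 1) := by
    simp
  rw [hlast]
  rw [add_comm]
  congr 1
  rw [fq, Finset.mul_sum]
  refine Finset.sum_congr rfl fun j hj => ?_
  have hjk : j ≤ k := by
    have := Finset.mem_range.mp hj; omega
  rw [Finset.prod_Ico_succ_top hjk]
  ring

/-- Consequence of the Durfee identity: `f (m+1) m = (1-q^{(m+1)²})/(1-q^{m+1})`. -/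
lemma fq_diag (m : ℕ) :
    fq (m + 1) m = (1 - q ^ ((m + 1) ^ 2)) / (1 - q ^ (m + 1)) := by
  have hterm : ∀ j ∈ Finset.range (m + 1),
      q ^ (j ^ 2) * qbinom (m + 1) j * ∏ t ∈ Finset.Ico j m, (1 - q ^ (t + 1))
      = poch (m + 1) * poch m * Aq j (m + 1 - j) := by
    intro j hj
    have hjm : j ≤ m := by have := Finset.mem_range.mp hj; omega
    have hb := qbinom_mul_poch (n := m + 1) (k := j) (by omega)
    have hico : poch j * ∏ t ∈ Finset.Ico j m, (1 - q ^ (t + 1)) = poch m := by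
      rw [poch, poch]
      exact Finset.prod_range_mul_prod_Ico _ hjm
    have hj0 := poch_ne_zero j
    have hjd := poch_ne_zero (m + 1 - j)
    rw [Aq, ← hb, ← hico]
    field_simp
  rw [fq, Finset.sum_congr rfl hterm, ← Finset.mul_sum]
  have hsum : ∑ j ∈ Finset.range (m + 1), Aq j (m + 1 - j)
      = 1 / poch (m + 1) ^ 2 - q ^ ((m + 1) ^ 2) / poch (m + 1) ^ 2 := by
    have h := durfee (m + 1)
    rw [Finset.Nat.sum_antidiagonal_eq_sum_range_succ_mk, Finset.sum_range_succ] at h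
    have h' : ∑ j ∈ Finset.range (m + 1), Aq j (m + 1 - j) + Aq (m + 1) 0
        = 1 / poch (m + 1) ^ 2 := by simpa using h
    have hlast : Aq (m + 1) 0 = q ^ ((m + 1) ^ 2) / poch (m + 1) ^ 2 := by
      rw [Aq, show poch 0 = 1 by simp [poch], mul_one]
    rw [hlast] at h'
    linear_combination h'
  rw [hsum]
  have h1 : ((1 : RatFunc ℚ) - q ^ (m + 1)) ≠ 0 := one_sub_q_pow_ne_zero (by omega)
  have hm0 := poch_ne_zero m
  have hm1 := poch_ne_zero (m + 1)
  rw [poch_succ]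
  field_simp

/-- `P k = ∏_{j=1}^k (1-q^{j²})/(1-q^j)`. -/
noncomputable def Pq (k : ℕ) : RatFunc ℚ :=
  ∏ j ∈ Finset.Icc 1 k, (1 - q ^ (j ^ 2)) / (1 - q ^ j)

lemma Pq_zero : Pq 0 = 1 := by simp [Pq]

lemma Pq_succ (k : ℕ) :
    Pq (k + 1) = Pq k * ((1 - q ^ ((k + 1) ^ 2)) / (1 - q ^ (k + 1))) := by
  rw [Pq, Pq, Finset.prod_Icc_succ_top (by omega)]

/-! ### `qmultinom` lemmas -/

lemma qmultinom_empty (n : ℕ) : qmultinom n ∅ = 1 := by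
  simp [qmultinom]

lemma sort_insert_max {k : ℕ} {μ : Finset ℕ} (h : ∀ x ∈ μ, x < k) :
    (insert k μ).sort (· ≤ ·) = μ.sort (· ≤ ·) ++ [k] := by
  have hk : k ∉ μ := fun hkμ => lt_irrefl k (h k hkμ)
  refine (fun hp hs => List.Perm.eq_of_pairwise' (Finset.pairwise_sort _ _) hs hp) ?_ ?_
  · refine ((Finset.sort_perm_toList _ _).trans ?_).trans
      (List.perm_append_singleton _ _).symm
    have h1 : (insert k μ).toList.Perm (k :: μ.toList) := Finset.toList_insert hk
    exact h1.trans (List.Perm.cons k (Finset.sort_perm_toList μ (· ≤ ·)).symm)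
  · refine List.pairwise_append.mpr ⟨Finset.pairwise_sort _ _, List.pairwise_singleton _ _, ?_⟩
    intro x hx y hy
    rw [List.mem_singleton] at hy
    subst hy
    exact le_of_lt (h x ((Finset.mem_sort _).mp hx))

lemma qmultinom_insert_max {n k : ℕ} {μ : Finset ℕ} (h : ∀ x ∈ μ, x < k) :
    qmultinom n (insert k μ) = qbinom n k * qmultinom k μ := by
  rw [qmultinom, qmultinom, sort_insert_max h]
  rw [List.reverse_append, List.reverse_singleton, List.singleton_append]
  rfl

/-! ### The main sum `T` -/

/-- The weighted sum over subsets of `{1, …, k}`. -/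
noncomputable def Tq (n k : ℕ) : RatFunc ℚ :=
  ∑ μ ∈ (Finset.Icc 1 k).powerset,
    qmultinom n μ * (∏ j ∈ μ, q ^ (j ^ 2)) * ∏ j ∈ Finset.Icc 1 k \ μ, (1 - q ^ (j ^ 2))

lemma Tq_zero (n : ℕ) : Tq n 0 = 1 := by
  rw [Tq]
  rw [show Finset.Icc 1 0 = (∅ : Finset ℕ) by simp]
  simp [qmultinom_empty]

lemma Tq_succ (n k : ℕ) :
    Tq n (k + 1) = (1 - q ^ ((k + 1) ^ 2)) * Tq n k
      + qbinom n (k + 1) * q ^ ((k + 1) ^ 2) * Tq (k + 1) k := by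
  have hins : Finset.Icc 1 (k + 1) = insert (k + 1) (Finset.Icc 1 k) := by
    ext x; simp [Finset.mem_Icc, Finset.mem_insert]; omega
  have hnotmem : k + 1 ∉ Finset.Icc 1 k := by simp
  rw [Tq, hins, Finset.sum_powerset_insert hnotmem]
  congr 1
  · -- subsets not containing k+1
    rw [Tq, Finset.mul_sum]
    refine Finset.sum_congr rfl fun μ hμ => ?_
    have hμs : μ ⊆ Finset.Icc 1 k := Finset.mem_powerset.mp hμ
    have hkμ : k + 1 ∉ μ := fun hmem => hnotmem (hμs hmem)
    have hsd : insert (k + 1) (Finset.Icc 1 k) \ μ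
        = insert (k + 1) (Finset.Icc 1 k \ μ) := by
      ext x
      simp only [Finset.mem_sdiff, Finset.mem_insert]
      constructor
      · rintro ⟨(rfl | hx), hxμ⟩
        · exact Or.inl rfl
        · exact Or.inr ⟨hx, hxμ⟩
      · rintro (rfl | ⟨hx, hxμ⟩)
        · exact ⟨Or.inl rfl, hkμ⟩
        · exact ⟨Or.inr hx, hxμ⟩
    rw [hsd, Finset.prod_insert (fun hmem => hnotmem (Finset.mem_sdiff.mp hmem).1)]
    ring
  · -- subsets containing k+1
    rw [Tq, Finset.mul_sum]
    refine Finset.sum_congr rfl fun μ hμ => ?_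
    have hμs : μ ⊆ Finset.Icc 1 k := Finset.mem_powerset.mp hμ
    have hkμ : k + 1 ∉ μ := fun hmem => hnotmem (hμs hmem)
    have hlt : ∀ x ∈ μ, x < k + 1 := fun x hx => by
      have := (Finset.mem_Icc.mp (hμs hx)).2; omega
    have hsd : insert (k + 1) (Finset.Icc 1 k) \ insert (k + 1) μ
        = Finset.Icc 1 k \ μ := by
      ext x
      simp only [Finset.mem_sdiff, Finset.mem_insert]
      constructor
      · rintro ⟨(rfl | hx), hxμ⟩
        · exact absurd (Or.inl rfl) hxμ
        · exact ⟨hx, fun hxm => hxμ (Or.inr hxm)⟩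
      · rintro ⟨hx, hxμ⟩
        exact ⟨Or.inr hx, by rintro (rfl | hxm); exacts [hnotmem hx, hxμ hxm]⟩
    rw [hsd, qmultinom_insert_max hlt, Finset.prod_insert hkμ]
    ring

lemma Tq_eq (k : ℕ) : ∀ n, Tq n k = Pq k * fq n k := by
  induction k with
  | zero => intro n; rw [Tq_zero, Pq_zero, fq_zero, one_mul]
  | succ k ih =>
    intro n
    rw [Tq_succ, ih n, ih (k + 1), fq_diag k, Pq_succ, fq_succ]
    have h1 : ((1 : RatFunc ℚ) - q ^ (k + 1)) ≠ 0 := one_sub_q_pow_ne_zero (by omega)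
    field_simp
    ring

/-- For `1 ≤ i ≤ d`:
`∑_{μ ⊆ {1,…,i-1}} (d choose μ∪{i})_q ∏_{j∈μ} q^(j²) ∏_{j∈{1,…,i-1}∖μ} (1-q^(j²))
  = (d choose i)_q ∏_{j=1}^{i} (1-q^(j²))/(1-q^j)`. -/
theorem qmultinom_subset_sum (d i : ℕ) (h1 : 1 ≤ i) (h2 : i ≤ d) :
    ∑ μ ∈ (Finset.Icc 1 (i - 1)).powerset,
      qmultinom d (insert i μ) * (∏ j ∈ μ, q ^ (j ^ 2)) *
        ∏ j ∈ Finset.Icc 1 (i - 1) \ μ, (1 - q ^ (j ^ 2))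
    = qbinom d i * ∏ j ∈ Finset.Icc 1 i, (1 - q ^ (j ^ 2)) / (1 - q ^ j) := by
  obtain ⟨k, rfl⟩ : ∃ k, i = k + 1 := ⟨i - 1, by omega⟩
  rw [show k + 1 - 1 = k by omega]
  have hstep : ∀ μ ∈ (Finset.Icc 1 k).powerset,
      qmultinom d (insert (k + 1) μ) * (∏ j ∈ μ, q ^ (j ^ 2)) *
        ∏ j ∈ Finset.Icc 1 k \ μ, (1 - q ^ (j ^ 2))
      = qbinom d (k + 1) *
        (qmultinom (k + 1) μ * (∏ j ∈ μ, q ^ (j ^ 2)) *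
          ∏ j ∈ Finset.Icc 1 k \ μ, (1 - q ^ (j ^ 2))) := by
    intro μ hμ
    have hμs : μ ⊆ Finset.Icc 1 k := Finset.mem_powerset.mp hμ
    have hlt : ∀ x ∈ μ, x < k + 1 := fun x hx => by
      have := (Finset.mem_Icc.mp (hμs hx)).2; omega
    rw [qmultinom_insert_max hlt]
    ring
  rw [Finset.sum_congr rfl hstep, ← Finset.mul_sum]
  have hT : ∑ μ ∈ (Finset.Icc 1 k).powerset,
      qmultinom (k + 1) μ * (∏ j ∈ μ, q ^ (j ^ 2)) *
        ∏ j ∈ Finset.Icc 1 k \ μ, (1 - q ^ (j ^ 2)) = Tq (k + 1) k := rfl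
  rw [hT, Tq_eq k (k + 1), fq_diag k, ← Pq_succ]
  rfl
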